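/- Let π be a probability measure on (E,ℰ), w : E → (0,∞) a bounded measurable weight function with π(w) > 0, and let (π^N)_{N≥1} be random probability measures satisfying E[|π^N(ψ) − π(ψ)|^p]^{1/p} ≤ C‖ψ‖/√N for some p ≥ 1 and all bounded measurable ψ. Define the reweighted measures π̃^N(φ) := π^N(wφ)/π^N(w) and π̃(φ) := π(wφ)/π(w). Then there is a constant C' such that E[|π̃^N(φ) − π̃(φ)|^p]^{1/p} ≤ C'‖φ‖/√N for all N > 0 and all bounded measurable φ. -/

import Mathlib

open MeasureTheory ProbabilityTheory
open scoped ENNReal NNReal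

lemma aux_meas_int {Ω E : Type*} [MeasurableSpace Ω] [MeasurableSpace E]
    (κ : Ω → Measure E) (hκ : Measurable κ) (h : ∀ ω, IsProbabilityMeasure (κ ω))
    (f : E → ℝ) (hf : Measurable f) :
    Measurable fun ω => ∫ x, f x ∂(κ ω) := by
  let K : ProbabilityTheory.Kernel Ω E := ⟨κ, hκ⟩
  have : IsMarkovKernel K := ⟨h⟩
  exact (MeasureTheory.StronglyMeasurable.integral_kernel_prod_right
    (κ := K) (f := fun (_ : Ω) x => f x)
    (hf.stronglyMeasurable.comp_measurable measurable_snd)).measurable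

lemma aux_int_bdd {E : Type*} [MeasurableSpace E] (μ : Measure E) [IsProbabilityMeasure μ]
    (f : E → ℝ) (hf : Measurable f) (c : ℝ) (hc : ∀ x, |f x| ≤ c) : Integrable f μ :=
  memLp_one_iff_integrable.mp
    (MemLp.of_bound hf.aestronglyMeasurable c (Filter.Eventually.of_forall
      (by simpa [Real.norm_eq_abs] using hc)))

lemma aux_abs_int_le {E : Type*} [MeasurableSpace E] (μ : Measure E) [IsProbabilityMeasure μ]
    (f : E → ℝ) (c : ℝ) (hc : ∀ x, |f x| ≤ c) : |∫ x, f x ∂μ| ≤ c := by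
  have := norm_integral_le_of_norm_le_const (μ := μ) (f := f) (C := c)
    (Filter.Eventually.of_forall (by simpa [Real.norm_eq_abs] using hc))
  simpa [Real.norm_eq_abs] using this

/-- Correction (reweighting) step preserves `L^p` inequalities: if the random probability
measures `π^N` approximate `π` at `L^p` rate `C‖ψ‖/√N`, and `w` is a bounded, everywhere
positive measurable weight with `π(w) > 0`, then the reweighted measures
`π̃^N(φ) = π^N(wφ)/π^N(w)` approximate `π̃(φ) = π(wφ)/π(w)` at the same rate (with a new
constant `C'`). -/
theorem stmt5
    {Ω : Type*} [MeasurableSpace Ω] (P : Measure Ω) [IsProbabilityMeasure P]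
    {E : Type*} [MeasurableSpace E]
    (π : Measure E) [IsProbabilityMeasure π]
    (w : E → ℝ) (hwmeas : Measurable w) (hwpos : ∀ x, 0 < w x)
    (Mw : ℝ) (hwbd : ∀ x, w x ≤ Mw)
    (hπw : 0 < ∫ x, w x ∂π)
    (πN : ℕ → Ω → Measure E)
    (hprob : ∀ N ω, IsProbabilityMeasure (πN N ω))
    (hmeas : ∀ N, Measurable (πN N))
    (hposN : ∀ N : ℕ, ∀ᵐ ω ∂P, 0 < ∫ x, w x ∂(πN N ω))
    (p C : ℝ) (hp : 1 ≤ p)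
    (hLp : ∀ N : ℕ, 0 < N → ∀ ψ : E → ℝ, Measurable ψ → ∀ M : ℝ, (∀ x, |ψ x| ≤ M) →
      (∫ ω, |(∫ x, ψ x ∂(πN N ω)) - ∫ x, ψ x ∂π| ^ p ∂P) ^ (1 / p)
        ≤ C * M / Real.sqrt N) :
    ∃ C' : ℝ, ∀ N : ℕ, 0 < N → ∀ φ : E → ℝ, Measurable φ → ∀ M : ℝ, (∀ x, |φ x| ≤ M) →
      (∫ ω, |(∫ x, w x * φ x ∂(πN N ω)) / (∫ x, w x ∂(πN N ω))
          - (∫ x, w x * φ x ∂π) / (∫ x, w x ∂π)| ^ p ∂P) ^ (1 / p)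
        ≤ C' * M / Real.sqrt N := by
  classical
  -- E is nonempty
  have hNE : Nonempty E := by
    by_contra h
    rw [not_nonempty_iff] at h
    rw [integral_of_isEmpty] at hπw
    exact lt_irrefl 0 hπw
  obtain ⟨x₀⟩ := hNE
  have hMw : 0 < Mw := lt_of_lt_of_le (hwpos x₀) (hwbd x₀)
  have hwabs : ∀ x, |w x| ≤ Mw := fun x => by
    rw [abs_of_pos (hwpos x)]; exact hwbd x
  -- C is nonneg
  have hC : 0 ≤ C := by
    have h1 := hLp 1 one_pos w hwmeas Mw hwabs
    have h0 : (0:ℝ) ≤ (∫ ω, |(∫ x, w x ∂(πN 1 ω)) - ∫ x, w x ∂π| ^ p ∂P) ^ (1/p) := by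
      apply Real.rpow_nonneg
      apply integral_nonneg
      intro ω
      positivity
    rw [Nat.cast_one, Real.sqrt_one, div_one] at h1
    nlinarith
  set πw := ∫ x, w x ∂π with hπw_def
  refine ⟨4 * C * Mw / πw, ?_⟩
  intro N hN φ hφ M hM
  have hM0 : 0 ≤ M := le_trans (abs_nonneg _) (hM x₀)
  have hsN : 0 < Real.sqrt N := Real.sqrt_pos.mpr (by exact_mod_cast hN)
  -- the normalized limit integral t
  set t := (∫ x, w x * φ x ∂π) / πw with ht_def
  have hwφ_abs : ∀ x, |w x * φ x| ≤ Mw * M := fun x => by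
    rw [abs_mul]
    exact mul_le_mul (hwabs x) (hM x) (abs_nonneg _) hMw.le
  -- |t| ≤ M
  have hwφπ_bd : ∀ (μ : Measure E) [IsProbabilityMeasure μ],
      |∫ x, w x * φ x ∂μ| ≤ M * ∫ x, w x ∂μ := by
    intro μ _
    have h1 : |∫ x, w x * φ x ∂μ| ≤ ∫ x, |w x * φ x| ∂μ := by
      simpa only [Real.norm_eq_abs] using
        norm_integral_le_integral_norm (μ := μ) (fun x => w x * φ x)
    have h2 : ∫ x, |w x * φ x| ∂μ ≤ ∫ x, M * w x ∂μ := by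
      apply integral_mono
      · exact (aux_int_bdd μ _ (hwmeas.mul hφ) (Mw * M) hwφ_abs).abs
      · exact (aux_int_bdd μ w hwmeas Mw hwabs).const_mul M
      · intro x
        show |w x * φ x| ≤ M * w x
        rw [abs_mul, abs_of_pos (hwpos x), mul_comm]
        exact mul_le_mul_of_nonneg_right (hM x) (hwpos x).le
    rw [integral_const_mul] at h2
    linarith
  have ht : |t| ≤ M := by
    rw [ht_def, abs_div, abs_of_pos hπw, div_le_iff₀ hπw]
    exact hwφπ_bd π
  -- the centered test function ψ
  set ψ : E → ℝ := fun x => w x * (φ x - t) with hψ_def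
  have hψmeas : Measurable ψ := hwmeas.mul (hφ.sub measurable_const)
  have hψbd : ∀ x, |ψ x| ≤ Mw * (2 * M) := fun x => by
    rw [hψ_def, abs_mul]
    apply mul_le_mul (hwabs x) ?_ (abs_nonneg _) hMw.le
    calc |φ x - t| ≤ |φ x| + |t| := abs_sub _ _
    _ ≤ M + M := add_le_add (hM x) ht
    _ = 2 * M := by ring
  have hψsplit : ∀ (μ : Measure E) [IsProbabilityMeasure μ],
      ∫ x, ψ x ∂μ = (∫ x, w x * φ x ∂μ) - t * ∫ x, w x ∂μ := by
    intro μ _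
    have h1 : ∫ x, ψ x ∂μ = ∫ x, (w x * φ x - t * w x) ∂μ := by
      apply integral_congr_ae
      filter_upwards with x
      simp only [hψ_def]; ring
    rw [h1, integral_sub (f := fun x => w x * φ x) (aux_int_bdd μ _ (hwmeas.mul hφ) (Mw * M) hwφ_abs)
      ((aux_int_bdd μ w hwmeas Mw hwabs).const_mul t), integral_const_mul]
  have hψπ : ∫ x, ψ x ∂π = 0 := by
    rw [hψsplit π, ht_def, ← hπw_def]
    field_simp
    ring
  -- the main random quantities
  set A : Ω → ℝ := fun ω => (∫ x, ψ x ∂(πN N ω)) - ∫ x, ψ x ∂π with hA_def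
  set B : Ω → ℝ := fun ω => (∫ x, w x ∂(πN N ω)) - πw with hB_def
  set Δ : Ω → ℝ := fun ω =>
    (∫ x, w x * φ x ∂(πN N ω)) / (∫ x, w x ∂(πN N ω)) - t with hΔ_def
  -- measurability
  have measA : Measurable A :=
    (aux_meas_int (πN N) (hmeas N) (hprob N) ψ hψmeas).sub measurable_const
  have measB : Measurable B :=
    (aux_meas_int (πN N) (hmeas N) (hprob N) w hwmeas).sub measurable_const
  have measΔ : Measurable Δ :=
    ((aux_meas_int (πN N) (hmeas N) (hprob N) _ (hwmeas.mul hφ)).div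
      (aux_meas_int (πN N) (hmeas N) (hprob N) w hwmeas)).sub measurable_const
  -- pointwise a.e. bound
  have hae : ∀ᵐ ω ∂P, |Δ ω| ≤ (1 / πw) * |A ω| + (2 * M / πw) * |B ω| := by
    filter_upwards [hposN N] with ω hb
    haveI := hprob N ω
    have hbne : (∫ x, w x ∂(πN N ω)) ≠ 0 := ne_of_gt hb
    have hA' : A ω = (∫ x, w x * φ x ∂(πN N ω)) - t * ∫ x, w x ∂(πN N ω) := by
      simp only [hA_def]
      rw [hψsplit (πN N ω), hψπ, sub_zero]
    have key : Δ ω * πw = A ω - Δ ω * B ω := by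
      simp only [hΔ_def, hB_def]
      rw [hA']
      field_simp
      ring
    have hΔbd : |Δ ω| ≤ 2 * M := by
      have h1 : |(∫ x, w x * φ x ∂(πN N ω)) / (∫ x, w x ∂(πN N ω))| ≤ M := by
        rw [abs_div, abs_of_pos hb, div_le_iff₀ hb]
        exact hwφπ_bd (πN N ω)
      calc |Δ ω| ≤ |(∫ x, w x * φ x ∂(πN N ω)) / (∫ x, w x ∂(πN N ω))| + |t| :=
            abs_sub _ _
      _ ≤ M + M := add_le_add h1 ht
      _ = 2 * M := by ring
    have hkey2 : |Δ ω| * πw ≤ |A ω| + 2 * M * |B ω| := by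
      calc |Δ ω| * πw = |Δ ω * πw| := by rw [abs_mul, abs_of_pos hπw]
      _ = |A ω - Δ ω * B ω| := by rw [key]
      _ ≤ |A ω| + |Δ ω * B ω| := abs_sub _ _
      _ ≤ |A ω| + 2 * M * |B ω| := by
          rw [abs_mul]
          exact add_le_add_right (mul_le_mul_of_nonneg_right hΔbd (abs_nonneg _)) _
    rw [div_mul_eq_mul_div, div_mul_eq_mul_div, one_mul, ← add_div, le_div_iff₀ hπw]
    linarith
  -- bounds for Memℒp
  have hAbd : ∀ ω, |A ω| ≤ 2 * (Mw * (2 * M)) := fun ω => by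
    haveI := hprob N ω
    rw [hA_def]
    calc |(∫ x, ψ x ∂(πN N ω)) - ∫ x, ψ x ∂π|
        ≤ |∫ x, ψ x ∂(πN N ω)| + |∫ x, ψ x ∂π| := abs_sub _ _
    _ ≤ Mw * (2 * M) + Mw * (2 * M) :=
        add_le_add (aux_abs_int_le (πN N ω) ψ _ hψbd) (aux_abs_int_le π ψ _ hψbd)
    _ = 2 * (Mw * (2 * M)) := by ring
  have hBbd : ∀ ω, |B ω| ≤ 2 * Mw := fun ω => by
    haveI := hprob N ω
    rw [hB_def]
    calc |(∫ x, w x ∂(πN N ω)) - πw| ≤ |∫ x, w x ∂(πN N ω)| + |πw| := abs_sub _ _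
    _ ≤ Mw + Mw := add_le_add (aux_abs_int_le (πN N ω) w _ hwabs)
        (aux_abs_int_le π w _ hwabs)
    _ = 2 * Mw := by ring
  have hΔbd' : ∀ᵐ ω ∂P, ‖Δ ω‖ ≤ 2 * (Mw * (2 * M)) / πw + 2 * M / πw * (2 * Mw) := by
    filter_upwards [hae] with ω hω
    rw [Real.norm_eq_abs]
    calc |Δ ω| ≤ (1 / πw) * |A ω| + (2 * M / πw) * |B ω| := hω
    _ ≤ (1 / πw) * (2 * (Mw * (2 * M))) + (2 * M / πw) * (2 * Mw) := by
        apply add_le_add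
        · exact mul_le_mul_of_nonneg_left (hAbd ω) (by positivity)
        · exact mul_le_mul_of_nonneg_left (hBbd ω) (by positivity)
    _ = 2 * (Mw * (2 * M)) / πw + 2 * M / πw * (2 * Mw) := by ring
  -- the exponent as ℝ≥0∞
  set q : ℝ≥0∞ := ENNReal.ofReal p with hq_def
  have hp0 : 0 < p := lt_of_lt_of_le one_pos hp
  have hq0 : q ≠ 0 := by
    simp [hq_def, ENNReal.ofReal_eq_zero, not_le, hp0]
  have hqt : q ≠ ⊤ := ENNReal.ofReal_ne_top
  have hq1 : 1 ≤ q := by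
    rw [hq_def, ← ENNReal.ofReal_one]
    exact ENNReal.ofReal_le_ofReal hp
  have hqr : q.toReal = p := ENNReal.toReal_ofReal hp0.le
  -- Memℒp facts
  have mA : MemLp A q P :=
    MemLp.of_bound measA.aestronglyMeasurable _
      (Filter.Eventually.of_forall (fun ω => by
        rw [Real.norm_eq_abs]; exact hAbd ω))
  have mB : MemLp B q P :=
    MemLp.of_bound measB.aestronglyMeasurable _
      (Filter.Eventually.of_forall (fun ω => by
        rw [Real.norm_eq_abs]; exact hBbd ω))
  have mΔ : MemLp Δ q P := MemLp.of_bound measΔ.aestronglyMeasurable _ hΔbd'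
  -- convert hLp bounds to eLpNorm bounds
  have hA_lp : eLpNorm A q P ≤ ENNReal.ofReal (C * (Mw * (2 * M)) / Real.sqrt N) := by
    rw [mA.eLpNorm_eq_integral_rpow_norm hq0 hqt]
    apply ENNReal.ofReal_le_ofReal
    have := hLp N hN ψ hψmeas (Mw * (2 * M)) hψbd
    rw [one_div] at this
    simpa [hqr, Real.norm_eq_abs, hA_def] using this
  have hB_lp : eLpNorm B q P ≤ ENNReal.ofReal (C * Mw / Real.sqrt N) := by
    rw [mB.eLpNorm_eq_integral_rpow_norm hq0 hqt]
    apply ENNReal.ofReal_le_ofReal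
    have := hLp N hN w hwmeas Mw hwabs
    rw [one_div] at this
    simpa [hqr, Real.norm_eq_abs, hB_def] using this
  -- triangle inequality
  have e1 : eLpNorm Δ q P
      ≤ eLpNorm (fun ω => (1 / πw) * |A ω| + (2 * M / πw) * |B ω|) q P := by
    apply eLpNorm_mono_ae
    filter_upwards [hae] with ω hω
    rw [Real.norm_eq_abs, Real.norm_eq_abs]
    exact le_trans hω (le_abs_self _)
  have e2 : eLpNorm (fun ω => (1 / πw) * |A ω| + (2 * M / πw) * |B ω|) q P
      ≤ eLpNorm (fun ω => (1 / πw) * |A ω|) q P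
        + eLpNorm (fun ω => (2 * M / πw) * |B ω|) q P :=
    eLpNorm_add_le ((measA.abs.const_mul _).aestronglyMeasurable)
      ((measB.abs.const_mul _).aestronglyMeasurable) hq1
  have e3 : eLpNorm (fun ω => (1 / πw) * |A ω|) q P
      = ENNReal.ofReal (1 / πw) * eLpNorm A q P := by
    have : (fun ω => (1 / πw) * |A ω|) = (1 / πw) • (fun ω => ‖A ω‖) := by
      funext ω; simp [Real.norm_eq_abs]
    rw [this, eLpNorm_const_smul, eLpNorm_norm,
      ← Real.enorm_eq_ofReal (by positivity : (0:ℝ) ≤ 1 / πw)]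
  have e4 : eLpNorm (fun ω => (2 * M / πw) * |B ω|) q P
      = ENNReal.ofReal (2 * M / πw) * eLpNorm B q P := by
    have : (fun ω => (2 * M / πw) * |B ω|) = (2 * M / πw) • (fun ω => ‖B ω‖) := by
      funext ω; simp [Real.norm_eq_abs]
    rw [this, eLpNorm_const_smul, eLpNorm_norm,
      ← Real.enorm_eq_ofReal (by positivity : (0:ℝ) ≤ 2 * M / πw)]
  have efinal : eLpNorm Δ q P ≤ ENNReal.ofReal (4 * C * Mw / πw * M / Real.sqrt N) := by
    calc eLpNorm Δ q P
        ≤ eLpNorm (fun ω => (1 / πw) * |A ω|) q P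
          + eLpNorm (fun ω => (2 * M / πw) * |B ω|) q P := le_trans e1 e2
    _ ≤ ENNReal.ofReal (1 / πw) * ENNReal.ofReal (C * (Mw * (2 * M)) / Real.sqrt N)
          + ENNReal.ofReal (2 * M / πw) * ENNReal.ofReal (C * Mw / Real.sqrt N) := by
        rw [e3, e4]
        exact add_le_add (mul_le_mul_right hA_lp _) (mul_le_mul_right hB_lp _)
    _ = ENNReal.ofReal ((1 / πw) * (C * (Mw * (2 * M)) / Real.sqrt N)
          + (2 * M / πw) * (C * Mw / Real.sqrt N)) := by
        rw [← ENNReal.ofReal_mul (by positivity), ← ENNReal.ofReal_mul (by positivity),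
          ← ENNReal.ofReal_add (by positivity) (by positivity)]
    _ = ENNReal.ofReal (4 * C * Mw / πw * M / Real.sqrt N) := by
        congr 1
        field_simp
        ring
  -- conclude
  have hconv : (∫ ω, |Δ ω| ^ p ∂P) ^ (1 / p) = (eLpNorm Δ q P).toReal := by
    rw [mΔ.eLpNorm_eq_integral_rpow_norm hq0 hqt, ENNReal.toReal_ofReal (by
      apply Real.rpow_nonneg
      apply integral_nonneg
      intro ω; positivity)]
    simp [hqr, Real.norm_eq_abs, one_div]
  have goal : (∫ ω, |Δ ω| ^ p ∂P) ^ (1 / p) ≤ 4 * C * Mw / πw * M / Real.sqrt N := by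
    rw [hconv]
    exact ENNReal.toReal_le_of_le_ofReal (by positivity) efinal
  simpa only [hΔ_def] using goal
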